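/- arXiv:1508.07867 — 3 statements merged into one kernel-verified Lean document; each statement's English description precedes it below -/
import Mathlib

section
/- Let p, p' ∈ ℂʳ be points such that for every polynomial g in r variables with coefficients algebraic over ℚ, one has g(p) = 0 if and only if g(p') = 0. Then there exists a ring automorphism σ of ℂ such that σ(a) = a for every a ∈ ℂ algebraic over ℚ, and σ(pᵢ) = p'ᵢ for all i = 1,…,r. -/
open scoped Cardinal

/-- Two injective embeddings of a small ring into an uncountable algebraically closed field
(or two such fields of equal cardinality) differ by an isomorphism of the fields. -/
theorem aux_ext_ring_hom {R L M : Type} [CommRing R] [Nontrivial R] [Field L] [Field M]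
    [IsAlgClosed L] [IsAlgClosed M] [Algebra R L] [Algebra R M]
    (hR : #R ≤ ℵ₀) (hL : ℵ₀ < #L) (hLM : #L = #M)
    (hf : Function.Injective (algebraMap R L)) (hg : Function.Injective (algebraMap R M)) :
    ∃ σ : L ≃+* M, ∀ x, σ (algebraMap R L x) = algebraMap R M x := by
  have := (faithfulSMul_iff_algebraMap_injective R L).mpr hf
  have := (faithfulSMul_iff_algebraMap_injective R M).mpr hg
  obtain ⟨s, hs⟩ := exists_isTranscendenceBasis R L
  obtain ⟨t, ht⟩ := exists_isTranscendenceBasis R M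
  have hst : (#s : Cardinal) = #t := by
    rw [← IsAlgClosed.cardinal_eq_cardinal_transcendence_basis_of_aleph0_lt' _ hs hR hL,
        ← IsAlgClosed.cardinal_eq_cardinal_transcendence_basis_of_aleph0_lt' _ ht hR
          (hLM ▸ hL), hLM]
  obtain ⟨e⟩ := Cardinal.eq.1 hst
  letI := IsAlgClosed.isAlgClosure_of_transcendence_basis _ hs
  letI := IsAlgClosed.isAlgClosure_of_transcendence_basis _ ht
  let E : Algebra.adjoin R (Set.range ((↑) : s → L)) ≃ₐ[R]
      Algebra.adjoin R (Set.range ((↑) : t → M)) :=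
    hs.1.aevalEquiv.symm.trans ((MvPolynomial.renameEquiv R e).trans ht.1.aevalEquiv)
  refine ⟨IsAlgClosure.equivOfEquiv L M E.toRingEquiv, fun x => ?_⟩
  rw [IsScalarTower.algebraMap_apply R (Algebra.adjoin R (Set.range ((↑) : s → L))) L x,
    IsAlgClosure.equivOfEquiv_algebraMap]
  have : E.toRingEquiv (algebraMap R _ x) = algebraMap R _ x := E.commutes x
  rw [this, ← IsScalarTower.algebraMap_apply]

set_option maxHeartbeats 1000000 in
/-- If two points `p, p' ∈ ℂʳ` lie on exactly the same hypersurfaces defined over `ℚ̄`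
(the algebraic closure of `ℚ` in `ℂ`), then there is a field automorphism of `ℂ` fixing
`ℚ̄` pointwise carrying `p` to `p'`. -/
theorem exists_galois_automorphism_of_same_Qbar_hypersurfaces (r : ℕ)
    (p p' : Fin r → ℂ)
    (h : ∀ g : MvPolynomial (Fin r) ℂ,
      (∀ d : Fin r →₀ ℕ, IsAlgebraic ℚ (MvPolynomial.coeff d g)) →
      (MvPolynomial.eval p g = 0 ↔ MvPolynomial.eval p' g = 0)) :
    ∃ σ : ℂ ≃+* ℂ, (∀ a : ℂ, IsAlgebraic ℚ a → σ a = a) ∧ ∀ i, σ (p i) = p' i := by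
  set K := algebraicClosure ℚ ℂ with hK
  let evp : MvPolynomial (Fin r) K →ₐ[K] ℂ := MvPolynomial.aeval p
  let evp' : MvPolynomial (Fin r) K →ₐ[K] ℂ := MvPolynomial.aeval p'
  have key : ∀ g : MvPolynomial (Fin r) K, evp g = 0 ↔ evp' g = 0 := by
    intro g
    have hcoeff : ∀ d : Fin r →₀ ℕ,
        IsAlgebraic ℚ (MvPolynomial.coeff d (MvPolynomial.map (algebraMap K ℂ) g)) := by
      intro d
      rw [MvPolynomial.coeff_map]
      exact mem_algebraicClosure_iff.mp (g.coeff d).2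
    have := h (MvPolynomial.map (algebraMap K ℂ) g) hcoeff
    rwa [MvPolynomial.eval_map, MvPolynomial.eval_map, ← MvPolynomial.aeval_def,
      ← MvPolynomial.aeval_def] at this
  have hker : RingHom.ker evp = RingHom.ker evp' := by
    ext g
    simpa only [RingHom.mem_ker] using key g
  set R₀ := MvPolynomial (Fin r) K ⧸ RingHom.ker evp with hR₀
  let f₀ : R₀ →ₐ[K] ℂ := Ideal.kerLiftAlg evp
  let f₀' : R₀ →ₐ[K] ℂ := Ideal.Quotient.liftₐ (RingHom.ker evp) evp'
    (fun a ha => by rw [hker] at ha; exact ha)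
  have hf₀' : ∀ g, f₀' (Ideal.Quotient.mk _ g) = evp' g := fun g => by
    rfl
  have hf₀ : ∀ g, f₀ (Ideal.Quotient.mk _ g) = evp g := fun g => Ideal.kerLiftAlg_mk evp g
  have hinj : Function.Injective f₀ := Ideal.kerLiftAlg_injective evp
  have hinj' : Function.Injective f₀' := by
    have : Function.Injective f₀'.toRingHom := by
      rw [RingHom.injective_iff_ker_eq_bot, RingHom.ker_eq_bot_iff_eq_zero]
      intro x hx
      obtain ⟨g, rfl⟩ := Ideal.Quotient.mk_surjective x
      have : evp' g = 0 := by rw [← hf₀' g]; exact hx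
      rw [Ideal.Quotient.eq_zero_iff_mem, hker]
      exact RingHom.mem_ker.2 this
    exact this
  haveI : Nontrivial R₀ := Ideal.Quotient.nontrivial_iff.mpr (RingHom.ker_ne_top evp)
  have hKcount : Countable K := by
    have h1 : Set.Countable {x : ℂ | IsAlgebraic ℚ x} := Algebraic.countable ℚ ℂ
    have h2 : ((K : IntermediateField ℚ ℂ) : Set ℂ) ⊆ {x : ℂ | IsAlgebraic ℚ x} :=
      fun x hx => mem_algebraicClosure_iff.mp hx
    exact (h1.mono h2).to_subtype
  have hRcard : (#R₀ : Cardinal) ≤ Cardinal.aleph0 := by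
    refine le_trans (Cardinal.mk_le_of_surjective
      (f := (Ideal.Quotient.mk (RingHom.ker evp))) Ideal.Quotient.mk_surjective) ?_
    refine le_trans MvPolynomial.cardinalMk_le_max ?_
    have h1 : (#K : Cardinal) ≤ Cardinal.aleph0 := Cardinal.mk_le_aleph0
    have h2 : (#(Fin r) : Cardinal) ≤ Cardinal.aleph0 := Cardinal.mk_le_aleph0
    exact max_le (max_le h1 h2) le_rfl
  have hCcard : Cardinal.aleph0 < (#ℂ : Cardinal) := by
    rw [Cardinal.mk_complex]; exact Cardinal.aleph0_lt_continuum
  letI alg1 : Algebra R₀ ℂ := f₀.toRingHom.toAlgebra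
  letI alg2 : Algebra R₀ ℂ := f₀'.toRingHom.toAlgebra
  obtain ⟨σ, hσ⟩ := @aux_ext_ring_hom R₀ ℂ ℂ _ _ _ _ _ _ alg1 alg2
    hRcard hCcard rfl hinj hinj'
  have hσ' : ∀ x : R₀, σ (f₀ x) = f₀' x := hσ
  refine ⟨σ, ?_, ?_⟩
  · intro a ha
    have haK : a ∈ K := mem_algebraicClosure_iff.mpr ha
    have h1 : f₀ (Ideal.Quotient.mk _ (MvPolynomial.C ⟨a, haK⟩)) = a := by
      rw [hf₀]; simp [evp]
    have h2 : f₀' (Ideal.Quotient.mk _ (MvPolynomial.C ⟨a, haK⟩)) = a := by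
      rw [hf₀']; simp [evp']
    nth_rewrite 1 [← h1]; rw [hσ', h2]
  · intro i
    have h1 : f₀ (Ideal.Quotient.mk _ (MvPolynomial.X i)) = p i := by
      rw [hf₀]; simp [evp]
    have h2 : f₀' (Ideal.Quotient.mk _ (MvPolynomial.X i)) = p' i := by
      rw [hf₀']; simp [evp']
    nth_rewrite 1 [← h1]; rw [hσ', h2]
end

section
/- Let T ⊆ ℂⁿ be the common zero set of a family of polynomials in n variables with coefficients algebraic over ℚ, and let q ∈ T be a point isolated in T with respect to the Euclidean topology (i.e., there is a Euclidean open neighborhood of q meeting T only in q). Then every coordinate of q is algebraic over ℚ. -/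
lemma aux_pow_card_le_prod (M : Multiset ℝ) (c : ℝ) (hc : 0 ≤ c) (h : ∀ x ∈ M, c ≤ x) :
    c ^ Multiset.card M ≤ M.prod := by
  induction M using Multiset.induction_on with
  | empty => simp
  | cons a s ih =>
    simp only [Multiset.prod_cons, Multiset.card_cons, pow_succ']
    exact mul_le_mul (h a (Multiset.mem_cons_self a s))
      (ih fun x hx => h x (Multiset.mem_cons_of_mem hx))
      (pow_nonneg hc _) (le_trans hc (h a (Multiset.mem_cons_self a s)))

open Polynomial in
lemma aux_exists_close_root (g : Polynomial ℂ) (hg : g.Monic) (hd : 0 < g.natDegree) (θ : ℂ) :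
    ∃ r : ℂ, g.eval r = 0 ∧ ‖θ - r‖ ^ g.natDegree ≤ ‖g.eval θ‖ := by
  have hsplits : Splits g := IsAlgClosed.splits g
  have hcard : g.natDegree = Multiset.card g.roots := by
    simpa using hsplits.natDegree_eq_card_roots
  have hne : g.roots ≠ 0 := by
    intro h
    rw [h] at hcard; simp at hcard; omega
  have hfne : g.roots.toFinset.Nonempty := by
    obtain ⟨a, ha⟩ := Multiset.exists_mem_of_ne_zero hne
    exact ⟨a, Multiset.mem_toFinset.2 ha⟩
  obtain ⟨r, hrmem, hrmin⟩ := g.roots.toFinset.exists_min_image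
    (fun a => ‖θ - a‖) hfne
  have hrroot : g.eval r = 0 := by
    have := Multiset.mem_toFinset.1 hrmem
    exact (Polynomial.isRoot_of_mem_roots this)
  refine ⟨r, hrroot, ?_⟩
  have hprod : g.eval θ = (g.roots.map (fun a => θ - a)).prod := by
    conv_lhs => rw [hsplits.eq_prod_roots_of_monic hg]
    rw [eval_multiset_prod, Multiset.map_map]
    simp
  rw [hprod, hcard]
  have : ‖(g.roots.map (fun a => θ - a)).prod‖
      = ((g.roots.map (fun a => θ - a)).map (‖·‖)).prod := by
    exact map_multiset_prod (normHom (α := ℂ)) _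
  rw [this, Multiset.map_map]
  have := aux_pow_card_le_prod ((g.roots.map (fun a => ‖θ - a‖))) (‖θ - r‖)
    (by positivity) ?_
  · simpa [Multiset.card_map] using this
  · intro x hx
    obtain ⟨a, ha, rfl⟩ := Multiset.mem_map.1 hx
    exact hrmin a (Multiset.mem_toFinset.2 ha)


open MvPolynomial in
lemma aux_shift_indep {K : Type*} [Field K] [Algebra K ℂ] {ι : Type*} [DecidableEq ι] (v : ι → ℂ)
    (hv : AlgebraicIndependent K v) (t0 : ι) (k : K) :
    AlgebraicIndependent K (fun b => if b = t0 then v b + algebraMap K ℂ k else v b) := by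
  rw [algebraicIndependent_iff_injective_aeval]
  have hvinj : Function.Injective (aeval (R := K) v) :=
    algebraicIndependent_iff_injective_aeval.1 hv
  set Φ : MvPolynomial ι K →ₐ[K] MvPolynomial ι K :=
    aeval (fun b => if b = t0 then X b + C k else X b) with hΦ
  set Φ' : MvPolynomial ι K →ₐ[K] MvPolynomial ι K :=
    aeval (fun b => if b = t0 then X b - C k else X b) with hΦ'
  have hcomp : Φ'.comp Φ = AlgHom.id K _ := by
    apply MvPolynomial.algHom_ext
    intro b
    by_cases hb : b = t0 <;> simp [hΦ, hΦ', hb]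
  have hΦinj : Function.Injective Φ := by
    intro x y hxy
    have := congrArg Φ' hxy
    simpa [← AlgHom.comp_apply, hcomp] using this
  have key : (aeval (R := K) (fun b => if b = t0 then v b + algebraMap K ℂ k else v b))
      = (aeval (R := K) v).comp Φ := by
    apply MvPolynomial.algHom_ext
    intro b
    by_cases hb : b = t0 <;> simp [hΦ, hb]
  rw [key]
  exact hvinj.comp hΦinj

open MvPolynomial in
lemma aux_lift {n : ℕ} {K : Type*} [Field K] [Algebra K ℂ] (P : MvPolynomial (Fin n) ℂ)
    (h : ∀ d, ∃ k : K, algebraMap K ℂ k = P.coeff d) :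
    ∃ Q : MvPolynomial (Fin n) K, MvPolynomial.map (algebraMap K ℂ) Q = P := by
  choose c hc using h
  refine ⟨∑ d ∈ P.support, monomial d (c d), ?_⟩
  rw [map_sum]
  simp_rw [MvPolynomial.map_monomial, hc]
  exact P.support_sum_monomial_coeff

set_option maxHeartbeats 1000000 in
set_option synthInstance.maxHeartbeats 400000 in
open MvPolynomial Filter in
lemma aux_deform {K : Type*} [Field K] [Algebra K ℂ] [CharZero K] {n : ℕ}
    (q : Fin n → ℂ) (i₀ : Fin n) (u : Set ℂ)
    (huind : AlgebraicIndependent K ((↑) : u → ℂ))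
    (htmem : q i₀ ∈ u)
    (halg_adjoin : ∀ i : Fin n,
      IsAlgebraic (Algebra.adjoin K (Set.range (Subtype.val : u → ℂ))) (q i))
    (Ps : Set (MvPolynomial (Fin n) ℂ))
    (hPs : ∀ P ∈ Ps, ∀ d : Fin n →₀ ℕ, ∃ k : K, algebraMap K ℂ k = MvPolynomial.coeff d P)
    (hq0 : ∀ P ∈ Ps, MvPolynomial.eval q P = 0) :
    ∃ x : ℕ → (Fin n → ℂ), (∀ m, ∀ P ∈ Ps, MvPolynomial.eval (x m) P = 0) ∧
      (∀ m, x m i₀ ≠ q i₀) ∧ ∀ i, Filter.Tendsto (fun m => x m i) Filter.atTop (nhds (q i)) := by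
  classical
  set t0 : u := ⟨q i₀, htmem⟩ with ht0
  set vfun : K → (u → ℂ) := fun k b => if b = t0 then (b : ℂ) + algebraMap K ℂ k else (b : ℂ)
    with hvfun
  have hv0 : vfun 0 = (Subtype.val : u → ℂ) := by
    funext b; by_cases hb : b = t0 <;> simp [hvfun, hb]
  have hindk : ∀ k : K, AlgebraicIndependent K (vfun k) := fun k =>
    aux_shift_indep (Subtype.val : u → ℂ) huind t0 k
  have hinjk : ∀ k, Function.Injective (MvPolynomial.aeval (R := K) (vfun k)) := fun k =>
    algebraicIndependent_iff_injective_aeval.1 (hindk k)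
  set σ : K → (FractionRing (MvPolynomial u K) →ₐ[K] ℂ) :=
    fun k => IsFractionRing.liftAlgHom (g := MvPolynomial.aeval (vfun k)) (hinjk k) with hσ
  have hσalg : ∀ (k : K) (p : MvPolynomial u K),
      σ k (algebraMap (MvPolynomial u K) (FractionRing (MvPolynomial u K)) p)
        = MvPolynomial.aeval (vfun k) p := by
    intro k p
    rw [hσ]
    simp only [IsFractionRing.liftAlgHom_apply]
    exact IsFractionRing.lift_algebraMap _ _
  letI : Algebra (FractionRing (MvPolynomial u K)) ℂ :=
    ((σ 0 : FractionRing (MvPolynomial u K) →ₐ[K] ℂ) : FractionRing (MvPolynomial u K) →+* ℂ).toAlgebra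
  have halgmap : (algebraMap (FractionRing (MvPolynomial u K)) ℂ)
      = ((σ 0 : FractionRing (MvPolynomial u K) →ₐ[K] ℂ) : FractionRing (MvPolynomial u K) →+* ℂ) := rfl
  have halgL : ∀ i : Fin n, IsAlgebraic (FractionRing (MvPolynomial u K)) (q i) := by
    intro i
    obtain ⟨p, hp0, hpv⟩ := halg_adjoin i
    set j : (Algebra.adjoin K (Set.range (Subtype.val : u → ℂ))) →ₐ[K]
        FractionRing (MvPolynomial u K) :=
      (IsScalarTower.toAlgHom K (MvPolynomial u K) (FractionRing (MvPolynomial u K))).comp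
        (huind.aevalEquiv.symm : _ →ₐ[K] MvPolynomial u K) with hj
    have hjinj : Function.Injective j :=
      (IsFractionRing.injective (MvPolynomial u K) (FractionRing (MvPolynomial u K))).comp
        (AlgEquiv.injective _)
    have hcompeq : (algebraMap (FractionRing (MvPolynomial u K)) ℂ).comp (j : _ →+* _)
        = algebraMap (Algebra.adjoin K (Set.range (Subtype.val : u → ℂ))) ℂ := by
      ext c
      show σ 0 (algebraMap (MvPolynomial u K) _ (huind.aevalEquiv.symm c)) = _
      rw [hσalg, hv0]
      exact huind.aeval_repr c
    refine ⟨p.map (j : _ →+* _), (Polynomial.map_ne_zero_iff hjinj).mpr hp0, ?_⟩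
    rw [Polynomial.aeval_def, Polynomial.eval₂_map, hcompeq]
    exact hpv
  haveI : CharZero (FractionRing (MvPolynomial u K)) :=
    RingHom.charZero ((σ 0 : FractionRing (MvPolynomial u K) →ₐ[K] ℂ) : _ →+* ℂ)
  haveI : Finite ↥(Set.range q) := (Set.finite_range _).to_subtype
  set E := IntermediateField.adjoin (FractionRing (MvPolynomial u K)) (Set.range q) with hE
  haveI : FiniteDimensional (FractionRing (MvPolynomial u K)) E :=
    IntermediateField.finiteDimensional_adjoin (fun x hx => (by
      obtain ⟨i, rfl⟩ := hx
      exact (halgL i).isIntegral))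
  obtain ⟨α, hα⟩ := Field.exists_primitive_element (FractionRing (MvPolynomial u K)) E
  set θ : ℂ := (α : ℂ) with hθ
  have hαint : IsIntegral (FractionRing (MvPolynomial u K)) α := IsIntegral.of_finite _ α
  have hθint : IsIntegral (FractionRing (MvPolynomial u K)) θ := hαint.map E.val
  have hgex : ∀ i : Fin n, ∃ gP : Polynomial (FractionRing (MvPolynomial u K)),
      Polynomial.aeval θ gP = q i := by
    intro i
    have hqi : q i ∈ E := IntermediateField.subset_adjoin _ _ ⟨i, rfl⟩
    have hx : (⟨q i, hqi⟩ : E) ∈ IntermediateField.adjoin (FractionRing (MvPolynomial u K)) {α} := by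
      rw [hα]; trivial
    have hx2 : (⟨q i, hqi⟩ : E) ∈ Algebra.adjoin (FractionRing (MvPolynomial u K)) {α} := by
      have := IntermediateField.adjoin_simple_toSubalgebra_of_isAlgebraic hαint.isAlgebraic
      rw [← IntermediateField.mem_toSubalgebra, this] at hx
      exact hx
    rw [Algebra.adjoin_singleton_eq_range_aeval] at hx2
    obtain ⟨gP, hgP⟩ := hx2
    refine ⟨gP, ?_⟩
    have h2 := Polynomial.aeval_algHom_apply E.val α gP
    have h3 : Polynomial.aeval α gP = ⟨q i, hqi⟩ := hgP
    rw [show θ = E.val α from rfl, h2, h3]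
    rfl
  set that : FractionRing (MvPolynomial u K) :=
    algebraMap (MvPolynomial u K) _ (MvPolynomial.X t0) with hthat
  have hσthat : ∀ k : K, σ k that = q i₀ + algebraMap K ℂ k := by
    intro k
    rw [hthat, hσalg]
    simp [hvfun, ht0]
  choose g0 hg0 using hgex
  set g : Fin n → Polynomial (FractionRing (MvPolynomial u K)) :=
    Function.update g0 i₀ (Polynomial.C that) with hgdef
  have hgq : ∀ i, Polynomial.aeval θ (g i) = q i := by
    intro i
    by_cases hi : i = i₀
    · subst hi
      rw [hgdef, Function.update_self, Polynomial.aeval_C, halgmap]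
      simpa using hσthat 0
    · rw [hgdef, Function.update_of_ne hi]; exact hg0 i
  set m := minpoly (FractionRing (MvPolynomial u K)) θ with hmm
  have hmmonic : m.Monic := minpoly.monic hθint
  have hmdeg : 0 < m.natDegree := minpoly.natDegree_pos hθint
  have key : ∀ (Q : MvPolynomial (Fin n) K) (τ : FractionRing (MvPolynomial u K) →ₐ[K] ℂ) (θ' : ℂ),
      Polynomial.eval₂ (τ : _ →+* ℂ) θ' (MvPolynomial.aeval (fun i => g i) Q)
        = MvPolynomial.eval (fun i => Polynomial.eval₂ (τ : _ →+* ℂ) θ' (g i))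
            (MvPolynomial.map (algebraMap K ℂ) Q) := by
    intro Q τ θ'
    rw [MvPolynomial.eval_map]
    have hhom : (Polynomial.eval₂RingHom (τ : _ →+* ℂ) θ').comp
        ((MvPolynomial.aeval (R := K) (fun i => g i)).toRingHom)
        = MvPolynomial.eval₂Hom (algebraMap K ℂ)
            (fun i => Polynomial.eval₂ (τ : _ →+* ℂ) θ' (g i)) := by
      apply MvPolynomial.ringHom_ext
      · intro a
        simp [MvPolynomial.algebraMap_eq, Polynomial.algebraMap_apply]
      · intro i
        simp
    have h2 := RingHom.congr_fun hhom Q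
    simpa using h2
  have hvanish : ∀ (k : K) (θ' : ℂ),
      Polynomial.eval₂ ((σ k : _ →ₐ[K] ℂ) : _ →+* ℂ) θ' m = 0 →
      ∀ P ∈ Ps, MvPolynomial.eval
        (fun i => Polynomial.eval₂ ((σ k : _ →ₐ[K] ℂ) : _ →+* ℂ) θ' (g i)) P = 0 := by
    intro k θ' hroot P hP
    obtain ⟨Q, hQ⟩ := aux_lift P (hPs P hP)
    have hH0 : Polynomial.aeval θ (MvPolynomial.aeval (fun i => g i) Q) = 0 := by
      rw [Polynomial.aeval_def, halgmap, key Q (σ 0) θ, hQ]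
      have heq : (fun i => Polynomial.eval₂ ((σ 0 : _ →ₐ[K] ℂ) : _ →+* ℂ) θ (g i)) = q := by
        funext i; rw [← hgq i, Polynomial.aeval_def, halgmap]
      rw [heq]; exact hq0 P hP
    obtain ⟨H1, hH1⟩ := minpoly.dvd _ θ hH0
    rw [← hQ, ← key Q (σ k) θ', hH1, Polynomial.eval₂_mul, ← hmm, hroot, zero_mul]
  set kk : ℕ → K := fun m' => (((m' : K) + 1))⁻¹ with hkk
  have hkk0 : ∀ m', kk m' ≠ 0 := by
    intro m'
    rw [hkk]
    simp only [ne_eq, inv_eq_zero]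
    exact Nat.cast_add_one_ne_zero m'
  set s : ℕ → ℂ := fun m' => algebraMap K ℂ (kk m') with hs
  have hsval : ∀ m', s m' = ((m' : ℂ) + 1)⁻¹ := by
    intro m'
    simp only [hs, hkk, map_inv₀, map_add, map_natCast, map_one]
  have hs0 : ∀ m', s m' ≠ 0 := by
    intro m'
    rw [hs]
    simp only [ne_eq, map_eq_zero]
    exact hkk0 m'
  have hstend : Tendsto s atTop (nhds 0) := by
    rw [tendsto_zero_iff_norm_tendsto_zero]
    have heq : (fun m' => ‖s m'‖) = fun m' : ℕ => 1 / ((m' : ℝ) + 1) := by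
      funext m'
      rw [hsval, norm_inv, one_div]
      congr 1
      have : ((m' : ℂ) + 1) = ((m' + 1 : ℕ) : ℂ) := by push_cast; ring
      rw [this, Complex.norm_natCast]
      push_cast; ring
    rw [heq]
    exact tendsto_one_div_add_atTop_nhds_zero_nat
  have hcont : ∀ c : FractionRing (MvPolynomial u K),
      Tendsto (fun m' => σ (kk m') c) atTop (nhds (σ 0 c)) := by
    intro c
    obtain ⟨p, r, hr, hc⟩ := IsFractionRing.div_surjective (A := MvPolynomial u K) c
    have hrne : r ≠ 0 := nonZeroDivisors.ne_zero hr
    have hσc : ∀ k : K, σ k c = MvPolynomial.aeval (vfun k) p / MvPolynomial.aeval (vfun k) r := by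
      intro k
      rw [← hc, map_div₀, hσalg, hσalg]
    simp_rw [hσc]
    have haux : ∀ w : MvPolynomial u K, Tendsto (fun m' => MvPolynomial.aeval (vfun (kk m')) w)
        atTop (nhds (MvPolynomial.aeval (vfun 0) w)) := by
      intro w
      have hrepr : ∀ k : K, MvPolynomial.aeval (vfun k) w
          = MvPolynomial.eval (fun b : u => if b = t0 then (b:ℂ) + algebraMap K ℂ k else (b:ℂ))
              (MvPolynomial.map (algebraMap K ℂ) w) := by
        intro k
        rw [MvPolynomial.eval_map]
        rfl
      simp_rw [hrepr]
      have hcont2 : Continuous (fun z : ℂ =>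
          MvPolynomial.eval (fun b : u => if b = t0 then (b:ℂ) + z else (b:ℂ))
            (MvPolynomial.map (algebraMap K ℂ) w)) := by
        apply Continuous.comp (MvPolynomial.continuous_eval _)
        apply continuous_pi
        intro b
        by_cases hb : b = t0
        · simp only [hb, if_pos]
          exact continuous_const.add continuous_id
        · simp only [if_neg hb]
          exact continuous_const
      have hcomp := (hcont2.tendsto 0).comp hstend
      simpa [Function.comp_def] using hcomp
    have hden : MvPolynomial.aeval (vfun 0) r ≠ 0 := by
      intro h
      apply hrne
      apply hinjk 0
      rw [h, map_zero]
    exact Filter.Tendsto.div (haux p) (haux r) hden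
  have hex : ∀ m' : ℕ, ∃ r : ℂ, (m.map ((σ (kk m') : _ →ₐ[K] ℂ) : _ →+* ℂ)).eval r = 0 ∧
      ‖θ - r‖ ^ m.natDegree
        ≤ ‖(m.map ((σ (kk m') : _ →ₐ[K] ℂ) : _ →+* ℂ)).eval θ‖ := by
    intro m'
    have hmon : (m.map ((σ (kk m') : _ →ₐ[K] ℂ) : _ →+* ℂ)).Monic := hmmonic.map _
    have hdeg : (m.map ((σ (kk m') : _ →ₐ[K] ℂ) : _ →+* ℂ)).natDegree = m.natDegree :=
      hmmonic.natDegree_map _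
    obtain ⟨r, h1, h2⟩ := aux_exists_close_root _ hmon (by rw [hdeg]; exact hmdeg) θ
    rw [hdeg] at h2
    exact ⟨r, h1, h2⟩
  choose θs hθroot hθbound using hex
  have hcoef : ∀ (k : K), (m.map ((σ k : _ →ₐ[K] ℂ) : _ →+* ℂ)).eval θ
      = ∑ j ∈ Finset.range (m.natDegree + 1), σ k (m.coeff j) * θ ^ j := by
    intro k
    rw [Polynomial.eval_map, Polynomial.eval₂_eq_sum_range]
    rfl
  have hme : Tendsto (fun m' => (m.map ((σ (kk m') : _ →ₐ[K] ℂ) : _ →+* ℂ)).eval θ)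
      atTop (nhds 0) := by
    have hlim0 : ∑ j ∈ Finset.range (m.natDegree + 1), σ 0 (m.coeff j) * θ ^ j = 0 := by
      rw [← hcoef 0]
      have heq2 : (m.map ((σ 0 : _ →ₐ[K] ℂ) : _ →+* ℂ)).eval θ = Polynomial.aeval θ m := by
        rw [Polynomial.aeval_def, halgmap, Polynomial.eval_map]
      rw [heq2, hmm]
      exact minpoly.aeval _ θ
    simp_rw [hcoef]
    rw [← hlim0]
    apply tendsto_finset_sum
    intro j _
    exact (hcont (m.coeff j)).mul tendsto_const_nhds
  have hθtend : Tendsto θs atTop (nhds θ) := by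
    rw [Metric.tendsto_atTop]
    intro ε hε
    have hεN : (0:ℝ) < ε ^ m.natDegree := pow_pos hε _
    have hev := (Metric.tendsto_nhds.mp hme) (ε ^ m.natDegree) hεN
    rw [Filter.eventually_atTop] at hev
    obtain ⟨N₀, hN₀⟩ := hev
    refine ⟨N₀, fun m' hm' => ?_⟩
    have hlt := hN₀ m' hm'
    rw [dist_zero_right] at hlt
    by_contra hcon
    push_neg at hcon
    have h1 : ε ^ m.natDegree ≤ ‖θ - θs m'‖ ^ m.natDegree := by
      apply pow_le_pow_left₀ hε.le
      rw [← Complex.dist_eq, dist_comm]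
      exact hcon
    have h2 := hθbound m'
    have h3 : ‖(m.map ((σ (kk m') : _ →ₐ[K] ℂ) : _ →+* ℂ)).eval θ‖
        ≤ ‖(m.map ((σ (kk m') : _ →ₐ[K] ℂ) : _ →+* ℂ)).eval θ‖ := le_of_eq rfl
    linarith
  refine ⟨fun m' i => Polynomial.eval₂ ((σ (kk m') : _ →ₐ[K] ℂ) : _ →+* ℂ) (θs m') (g i), ?_, ?_, ?_⟩
  · intro m' P hP
    exact hvanish (kk m') (θs m')
      (by rw [Polynomial.eval₂_eq_eval_map]; exact hθroot m') P hP
  · intro m'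
    have hx : Polynomial.eval₂ ((σ (kk m') : _ →ₐ[K] ℂ) : _ →+* ℂ) (θs m') (g i₀)
        = σ (kk m') that := by
      rw [hgdef, Function.update_self, Polynomial.eval₂_C]
      rfl
    show Polynomial.eval₂ ((σ (kk m') : _ →ₐ[K] ℂ) : _ →+* ℂ) (θs m') (g i₀) ≠ q i₀
    rw [hx, hσthat]
    intro hcon
    exact hs0 m' (add_eq_left.mp hcon)
  · intro i
    have hrepr2 : ∀ (k : K) (θ' : ℂ), Polynomial.eval₂ ((σ k : _ →ₐ[K] ℂ) : _ →+* ℂ) θ' (g i)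
        = ∑ j ∈ Finset.range ((g i).natDegree + 1), σ k ((g i).coeff j) * θ' ^ j := by
      intro k θ'
      rw [Polynomial.eval₂_eq_sum_range]
      rfl
    simp_rw [hrepr2]
    have hql : q i = ∑ j ∈ Finset.range ((g i).natDegree + 1), σ 0 ((g i).coeff j) * θ ^ j := by
      rw [← hrepr2 0 θ, ← halgmap, ← Polynomial.aeval_def]
      exact (hgq i).symm
    rw [hql]
    apply tendsto_finset_sum
    intro j _
    exact (hcont _).mul (hθtend.pow j)

set_option maxHeartbeats 1000000 in
set_option synthInstance.maxHeartbeats 400000 in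
open Filter in
/-- An isolated point (for the Euclidean topology) of the common zero set of a family of
polynomials with coefficients algebraic over `ℚ` has all of its coordinates algebraic
over `ℚ`. -/
theorem isolated_point_of_Qbar_variety_is_algebraic (n : ℕ)
    (Ps : Set (MvPolynomial (Fin n) ℂ))
    (hPs : ∀ P ∈ Ps, ∀ d : Fin n →₀ ℕ, IsAlgebraic ℚ (MvPolynomial.coeff d P))
    (T : Set (EuclideanSpace ℂ (Fin n)))
    (hT : T = {x | ∀ P ∈ Ps, MvPolynomial.eval (fun i => x i) P = 0})
    (q : EuclideanSpace ℂ (Fin n)) (hq : q ∈ T)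
    (hiso : ∃ U : Set (EuclideanSpace ℂ (Fin n)), IsOpen U ∧ q ∈ U ∧ T ∩ U = {q}) :
    ∀ i, IsAlgebraic ℚ (q i) := by
  classical
  intro i₀
  by_contra h0
  obtain ⟨U, hUopen, hqU, hTU⟩ := hiso
  set K := algebraicClosure ℚ ℂ with hK
  haveI : CharZero K := RingHom.charZero (algebraMap K ℂ)
  have htK : Transcendental K ((q i₀ : ℂ)) := by
    intro halg
    apply h0
    have h1 : IsIntegral K (q i₀) := halg.isIntegral
    have h2 : Algebra.IsIntegral ℚ K := by
      haveI : Algebra.IsAlgebraic ℚ K := algebraicClosure.isAlgebraic ℚ ℂ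
      exact Algebra.IsAlgebraic.isIntegral
    exact (isIntegral_trans _ h1).isAlgebraic
  set t : ℂ := (q i₀ : ℂ) with htdef
  set Z : Set ℂ := Set.range (fun i : Fin n => (q i : ℂ)) with hZ
  have htZ : t ∈ Z := ⟨i₀, rfl⟩
  have hsing : AlgebraicIndependent K ((↑) : ({t} : Set ℂ) → ℂ) := by
    rw [algebraicIndependent_unique_type_iff]
    simpa using htK
  obtain ⟨u, htu, humax⟩ := exists_maximal_algebraicIndependent ({t} : Set ℂ) Z
    (Set.singleton_subset_iff.2 htZ) hsing
  obtain ⟨⟨huind, huZ⟩, humax'⟩ := humax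
  have htmem : t ∈ u := htu rfl
  have halg_adjoin : ∀ a ∈ Z,
      IsAlgebraic (Algebra.adjoin K (Set.range (Subtype.val : u → ℂ))) a := by
    intro a haZ
    by_cases hau : a ∈ u
    · have : a = algebraMap (Algebra.adjoin K (Set.range (Subtype.val : u → ℂ))) ℂ
          ⟨a, Algebra.subset_adjoin ⟨⟨a, hau⟩, rfl⟩⟩ := rfl
      rw [this]
      exact isAlgebraic_algebraMap _
    · by_contra htrans
      have hopt : AlgebraicIndependent K (fun o : Option u => o.elim a Subtype.val) :=
        (huind.option_iff_transcendental a).2 htrans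
      have hins : AlgebraicIndependent K ((↑) : ↥(insert a u) → ℂ) := by
        convert hopt.comp _ (Set.subtypeInsertEquivOption hau).injective
        ext x
        by_cases h : ↑x = a <;> simp [h, Set.subtypeInsertEquivOption]
      have hle := humax' ⟨hins, Set.insert_subset haZ huZ⟩ (Set.subset_insert a u)
      exact hau (hle (Set.mem_insert a u))
  have halg_adjoin' : ∀ i : Fin n,
      IsAlgebraic (Algebra.adjoin K (Set.range (Subtype.val : u → ℂ))) ((q i : ℂ)) :=
    fun i => halg_adjoin _ ⟨i, rfl⟩
  have hPs' : ∀ P ∈ Ps, ∀ d : Fin n →₀ ℕ,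
      ∃ k : K, algebraMap K ℂ k = MvPolynomial.coeff d P := by
    intro P hP d
    exact ⟨⟨MvPolynomial.coeff d P, mem_algebraicClosure_iff.2 (hPs P hP d)⟩, rfl⟩
  have hq0 : ∀ P ∈ Ps, MvPolynomial.eval (fun i => q i) P = 0 := by
    rw [hT] at hq
    exact hq
  obtain ⟨x, hx0, hxne, hxtend⟩ :=
    aux_deform (K := K) (fun i => q i) i₀ u huind htmem halg_adjoin' Ps hPs' hq0
  set y : ℕ → EuclideanSpace ℂ (Fin n) :=
    fun m' => (EuclideanSpace.equiv (Fin n) ℂ).symm (x m') with hy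
  have hyT : ∀ m', y m' ∈ T := by
    intro m'
    rw [hT]
    intro P hP
    exact hx0 m' P hP
  have hytend : Tendsto y atTop (nhds q) := by
    have h1 : Tendsto x atTop (nhds (fun i => q i)) := tendsto_pi_nhds.2 hxtend
    have h2 := ((EuclideanSpace.equiv (Fin n) ℂ).symm.continuous.tendsto _).comp h1
    exact h2
  have hev : ∀ᶠ m' in atTop, y m' ∈ U := hytend (hUopen.mem_nhds hqU)
  obtain ⟨m', hm'⟩ := hev.exists
  have hmem : y m' ∈ T ∩ U := ⟨hyT m', hm'⟩
  rw [hTU] at hmem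
  have heq : y m' = q := hmem
  apply hxne m'
  have := congrFun (congrArg (fun (z : EuclideanSpace ℂ (Fin n)) => (z : Fin n → ℂ)) heq) i₀
  exact this
end

section
/- Let V ⊆ (ℂˣ)ʳ be a finite union of torsion translates of subtori of (ℂˣ)ʳ. Suppose that for every ring automorphism σ of ℂ, the coordinatewise action of σ maps V into V. Then V is stable under coordinatewise inversion: if λ = (λ₁,…,λᵣ) ∈ V then λ⁻¹ = (λ₁⁻¹,…,λᵣ⁻¹) ∈ V. -/
/-- A subtorus of `(ℂˣ)ʳ`: the image of a monomial map `(ℂˣ)ᵈ → (ℂˣ)ʳ` given by an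
integer matrix. -/
def IsSubtorus {r : ℕ} (T₀ : Set (Fin r → ℂˣ)) : Prop :=
  ∃ (d : ℕ) (m : Matrix (Fin r) (Fin d) ℤ),
    T₀ = {x | ∃ t : Fin d → ℂˣ, ∀ i, x i = ∏ j, t j ^ m i j}

/-- A point of `(ℂˣ)ʳ` is torsion if all its coordinates are roots of unity. -/
def IsTorsionPoint {r : ℕ} (ρ : Fin r → ℂˣ) : Prop :=
  ∀ i, ∃ k : ℕ, 0 < k ∧ ρ i ^ k = 1

/-- A torsion translate of a subtorus of `(ℂˣ)ʳ`. -/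
def IsTorsionTranslateOfSubtorus {r : ℕ} (V : Set (Fin r → ℂˣ)) : Prop :=
  ∃ (ρ : Fin r → ℂˣ) (T₀ : Set (Fin r → ℂˣ)), IsTorsionPoint ρ ∧ IsSubtorus T₀ ∧
    V = (fun x => ρ * x) '' T₀

/-- A finite union of torsion translates of subtori of `(ℂˣ)ʳ` that is stable under the
coordinatewise action of every ring automorphism of `ℂ` is stable under coordinatewise
inversion. -/
theorem inv_mem_of_galois_stable_union_of_torsion_translates (r : ℕ)
    (k : ℕ) (W : Fin k → Set (Fin r → ℂˣ))
    (hW : ∀ j, IsTorsionTranslateOfSubtorus (W j))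
    (V : Set (Fin r → ℂˣ)) (hV : V = ⋃ j, W j)
    (hGal : ∀ σ : ℂ ≃+* ℂ, ∀ lam ∈ V, (fun i => Units.map (σ : ℂ →* ℂ) (lam i)) ∈ V) :
    ∀ lam ∈ V, lam⁻¹ ∈ V := by
  intro lam hlam
  rw [hV] at hlam
  obtain ⟨j, hj⟩ := Set.mem_iUnion.mp hlam
  obtain ⟨ρ, T₀, hρ, ⟨d, m, hT⟩, hWj⟩ := hW j
  rw [hWj] at hj
  obtain ⟨x, hxT, hlx⟩ := hj
  rw [hT] at hxT
  obtain ⟨t, ht⟩ := hxT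
  set σ : ℂ ≃+* ℂ := Complex.conjAe.toRingEquiv with hσ
  have hσval : ∀ c : ℂ, σ c = (starRingEnd ℂ) c := fun c => rfl
  set s : Fin d → ℂˣ := fun a => Units.map (σ : ℂ →* ℂ) (t a)⁻¹ with hs
  set z : Fin r → ℂˣ := fun i => ρ i * ∏ a, s a ^ m i a with hzdef
  have hzV : z ∈ V := by
    rw [hV]
    refine Set.mem_iUnion.mpr ⟨j, ?_⟩
    rw [hWj]
    refine ⟨fun i => ∏ a, s a ^ m i a, ?_, rfl⟩
    rw [hT]
    exact ⟨s, fun i => rfl⟩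
  have key := hGal σ z hzV
  have hστ : ∀ u : ℂˣ, Units.map (σ : ℂ →* ℂ) (Units.map (σ : ℂ →* ℂ) u) = u := by
    intro u
    ext
    simp only [Units.coe_map, MonoidHom.coe_coe, hσval, Complex.conj_conj]
  have hρinv : ∀ i, Units.map (σ : ℂ →* ℂ) (ρ i) = (ρ i)⁻¹ := by
    intro i
    obtain ⟨n, hn, h1⟩ := hρ i
    have hpow : (ρ i : ℂ) ^ n = 1 := by
      rw [← Units.val_pow_eq_pow_val, h1, Units.val_one]
    have habs : ‖((ρ i : ℂ))‖ = 1 := by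
      exact Complex.norm_eq_one_of_pow_eq_one hpow hn.ne'
    ext
    simp only [Units.coe_map, MonoidHom.coe_coe, hσval]
    rw [← Complex.inv_eq_conj habs]
    exact (Units.val_inv_eq_inv_val _).symm
  have hfinal : lam⁻¹ = fun i => Units.map (σ : ℂ →* ℂ) (z i) := by
    funext i
    have hlam_i : lam i = ρ i * x i := by rw [← hlx]; rfl
    have hzmap : Units.map (σ : ℂ →* ℂ) (z i)
        = (ρ i)⁻¹ * ∏ a, ((t a)⁻¹) ^ m i a := by
      rw [hzdef]
      simp only [map_mul, map_prod, map_zpow, hρinv i, hs, hστ]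
    rw [Pi.inv_apply, hzmap, hlam_i, ht i, mul_inv, ← Finset.prod_inv_distrib]
    simp only [← inv_zpow]
  rw [hfinal]
  exact key
end
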